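/- There exists a constant C < ∞ such that for every ℓ with 0 < ℓ < 2·arsinh(1), one has | 8π·∫_{−X(ℓ)}^{X(ℓ)} ρ_ℓ(s)^{−2} ds − ( 32π⁵/ℓ³ − 16π⁴/3 ) | ≤ C·ℓ², where ρ_ℓ(s) = ℓ/(2π·cos(ℓ·s/(2π))) and X(ℓ) = (2π/ℓ)·(π/2 − arctan(sinh(ℓ/2))). -/

import Mathlib

/-- Half-length of the hyperbolic collar around a geodesic of length `ℓ`. -/
noncomputable def collarX (ℓ : ℝ) : ℝ :=
  2 * Real.pi / ℓ * (Real.pi / 2 - Real.arctan (Real.sinh (ℓ / 2)))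

/-- Conformal factor of the hyperbolic collar. -/
noncomputable def collarRho (ℓ s : ℝ) : ℝ :=
  ℓ / (2 * Real.pi * Real.cos (ℓ * s / (2 * Real.pi)))

namespace Dz2Aux

open Real intervalIntegral

lemma self_le_sinh' {x : ℝ} (hx : 0 ≤ x) : x ≤ Real.sinh x := by
  rcases hx.eq_or_lt with h | h
  · simp [← h]
  · exact (Real.self_lt_sinh_iff.2 h).le

lemma sinh_le_self_mul_cosh {x : ℝ} (hx : 0 ≤ x) : Real.sinh x ≤ x * Real.cosh x := by
  have hd : ∀ y ∈ Set.uIcc 0 x, HasDerivAt (fun y => y * Real.cosh y - Real.sinh y)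
      (y * Real.sinh y) y := by
    intro y _
    have h := ((hasDerivAt_id y).mul (Real.hasDerivAt_cosh y)).sub (Real.hasDerivAt_sinh y)
    refine h.congr_deriv ?_
    simp only [id]
    ring
  have hint : IntervalIntegrable (fun y => y * Real.sinh y) MeasureTheory.volume 0 x :=
    (continuous_id.mul Real.continuous_sinh).intervalIntegrable 0 x
  have := intervalIntegral.integral_eq_sub_of_hasDerivAt hd hint
  have hnn : 0 ≤ ∫ y in (0:ℝ)..x, y * Real.sinh y := by
    apply intervalIntegral.integral_nonneg hx
    intro u hu
    have := Real.sinh_le_sinh.mpr hu.1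
    simp only [Real.sinh_zero] at this
    exact mul_nonneg hu.1 this
  simp only [Real.sinh_zero, Real.cosh_zero, mul_one, zero_mul, sub_zero, sub_self] at this
  nlinarith [this, hnn]

lemma cosh_le_two {x : ℝ} (hx1 : |x| ≤ 1) : Real.cosh x ≤ 2 := by
  have h : Real.cosh x ≤ Real.cosh 1 := Real.cosh_le_cosh.mpr (by rwa [abs_one])
  have he : Real.cosh 1 < 2 := by
    rw [Real.cosh_eq]
    have h1 : Real.exp 1 < 2.7182818286 := Real.exp_one_lt_d9
    have h2 : Real.exp (-1) < 1 := by
      calc Real.exp (-1) < Real.exp 0 := Real.exp_lt_exp.mpr (by norm_num)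
        _ = 1 := Real.exp_zero
    nlinarith
  linarith

lemma deriv_bound {x : ℝ} (hx0 : 0 ≤ x) (hx1 : x ≤ 1) (hsle : Real.sinh x ≤ x * Real.cosh x)
    (hxs : x ≤ Real.sinh x) :
    |2 * (x ^ 2 * Real.cosh x ^ 3 - Real.sinh x ^ 2) / Real.cosh x ^ 3| ≤ 52 * x ^ 4 := by
  have hc := Real.cosh_pos x
  have hc1 := Real.one_le_cosh x
  have hc2 : Real.cosh x ≤ 2 := cosh_le_two (by rw [abs_of_nonneg hx0]; exact hx1)
  have hsq : Real.cosh x ^ 2 = 1 + Real.sinh x ^ 2 := Real.cosh_sq' x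
  have hs0 : 0 ≤ Real.sinh x := le_trans hx0 hxs
  have hs2x : Real.sinh x ≤ 2 * x := by nlinarith
  have hchu : Real.cosh x ≤ 1 + 2 * x ^ 2 := by nlinarith
  have hcc : (1:ℝ) ≤ Real.cosh x ^ 3 := by nlinarith
  have hxlow : x ^ 2 ≤ Real.sinh x ^ 2 := by nlinarith
  have h64 : x ^ 6 ≤ x ^ 4 := pow_le_pow_of_le_one hx0 hx1 (by norm_num)
  have h84 : x ^ 8 ≤ x ^ 4 := pow_le_pow_of_le_one hx0 hx1 (by norm_num)
  have hnumub : x ^ 2 * Real.cosh x ^ 3 - Real.sinh x ^ 2 ≤ 26 * x ^ 4 := by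
    have h3 : Real.cosh x ^ 3 ≤ (1 + 2 * x ^ 2) ^ 3 := pow_le_pow_left₀ hc.le hchu 3
    nlinarith [mul_le_mul_of_nonneg_left h3 (sq_nonneg x)]
  have hnumlb : -(4 * x ^ 4) ≤ x ^ 2 * Real.cosh x ^ 3 - Real.sinh x ^ 2 := by
    have hs2 : Real.sinh x ^ 2 ≤ x ^ 2 * (1 + 4 * x ^ 2) := by
      nlinarith [mul_le_mul hsle hsle hs0 (mul_nonneg hx0 hc.le),
        mul_le_mul hs2x hs2x hs0 (by positivity : (0:ℝ) ≤ 2 * x)]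
    nlinarith [mul_le_mul_of_nonneg_left hcc (sq_nonneg x)]
  have habsN : |x ^ 2 * Real.cosh x ^ 3 - Real.sinh x ^ 2| ≤ 26 * x ^ 4 :=
    abs_le.mpr ⟨by linarith, hnumub⟩
  rw [abs_div, abs_of_pos (by positivity : (0:ℝ) < Real.cosh x ^ 3)]
  calc |2 * (x ^ 2 * Real.cosh x ^ 3 - Real.sinh x ^ 2)| / Real.cosh x ^ 3
      ≤ |2 * (x ^ 2 * Real.cosh x ^ 3 - Real.sinh x ^ 2)| := div_le_self (abs_nonneg _) hcc
    _ ≤ 52 * x ^ 4 := by rw [abs_mul, abs_two]; linarith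

lemma phi_hasDerivAt (x : ℝ) :
    HasDerivAt (fun y => Real.sinh y / Real.cosh y ^ 2 - Real.arctan (Real.sinh y) + 2/3 * y ^ 3)
      (2 * (x ^ 2 * Real.cosh x ^ 3 - Real.sinh x ^ 2) / Real.cosh x ^ 3) x := by
  have hc := Real.cosh_pos x
  have hc' : Real.cosh x ≠ 0 := hc.ne'
  have h1 := (Real.hasDerivAt_sinh x).div ((Real.hasDerivAt_cosh x).pow 2) (pow_ne_zero 2 hc')
  have h2 := (Real.hasDerivAt_sinh x).arctan
  have h3 := (hasDerivAt_pow 3 x).const_mul (2/3 : ℝ)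
  have h := (h1.sub h2).add h3
  refine h.congr_deriv ?_
  simp only [Pi.pow_apply]
  have hs : (1:ℝ) + Real.sinh x ^ 2 = Real.cosh x ^ 2 := (Real.cosh_sq' x).symm
  rw [hs]
  field_simp
  ring

lemma phi_bound {t : ℝ} (ht0 : 0 ≤ t) (ht1 : t ≤ 1) :
    |Real.sinh t / Real.cosh t ^ 2 - Real.arctan (Real.sinh t) + 2/3 * t ^ 3| ≤ 52 * t ^ 5 := by
  have hcont : Continuous fun x : ℝ =>
      2 * (x ^ 2 * Real.cosh x ^ 3 - Real.sinh x ^ 2) / Real.cosh x ^ 3 := by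
    apply Continuous.div
    · fun_prop
    · fun_prop
    · intro x; positivity
  have heq := intervalIntegral.integral_eq_sub_of_hasDerivAt
    (f := fun y => Real.sinh y / Real.cosh y ^ 2 - Real.arctan (Real.sinh y) + 2/3 * y ^ 3)
    (f' := fun x => 2 * (x ^ 2 * Real.cosh x ^ 3 - Real.sinh x ^ 2) / Real.cosh x ^ 3)
    (a := 0) (b := t) (fun x _ => phi_hasDerivAt x) (hcont.intervalIntegrable 0 t)
  simp only [Real.sinh_zero, Real.cosh_zero, Real.arctan_zero, one_pow, zero_div, sub_zero,
    zero_pow, mul_zero, add_zero, div_one] at heq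
  have hb := intervalIntegral.norm_integral_le_of_norm_le_const
    (C := 52 * t ^ 4)
    (f := fun x => 2 * (x ^ 2 * Real.cosh x ^ 3 - Real.sinh x ^ 2) / Real.cosh x ^ 3)
    (a := 0) (b := t) ?_
  · rw [heq] at hb
    norm_num [abs_of_nonneg ht0] at hb
    calc |Real.sinh t / Real.cosh t ^ 2 - Real.arctan (Real.sinh t) + 2/3 * t ^ 3|
        ≤ 52 * t ^ 4 * t := hb
      _ = 52 * t ^ 5 := by ring
  · intro x hx
    rw [Set.uIoc_of_le ht0] at hx
    have hx0 : 0 ≤ x := hx.1.le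
    have hx1 : x ≤ 1 := hx.2.trans ht1
    rw [Real.norm_eq_abs]
    calc |2 * (x ^ 2 * Real.cosh x ^ 3 - Real.sinh x ^ 2) / Real.cosh x ^ 3|
        ≤ 52 * x ^ 4 := deriv_bound hx0 hx1 (sinh_le_self_mul_cosh hx0) (self_le_sinh' hx0)
      _ ≤ 52 * t ^ 4 := by nlinarith [pow_le_pow_left₀ hx0 (hx.2 : x ≤ t) 4]

lemma collar_integral (ℓ : ℝ) (hl : 0 < ℓ) :
    (∫ s in (-(collarX ℓ))..(collarX ℓ), (collarRho ℓ s ^ 2)⁻¹)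
      = 8 * Real.pi ^ 3 / ℓ ^ 3 *
        ((Real.pi / 2 - Real.arctan (Real.sinh (ℓ / 2)))
          + Real.sin (Real.pi / 2 - Real.arctan (Real.sinh (ℓ / 2)))
            * Real.cos (Real.pi / 2 - Real.arctan (Real.sinh (ℓ / 2)))) := by
  have hpi := Real.pi_pos
  have hl' : ℓ ≠ 0 := hl.ne'
  set A := Real.pi / 2 - Real.arctan (Real.sinh (ℓ / 2)) with hA
  have hc : ℓ / (2 * Real.pi) ≠ 0 := by positivity
  have hcong : ∀ s : ℝ, (collarRho ℓ s ^ 2)⁻¹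
      = (2 * Real.pi / ℓ) ^ 2 * Real.cos (s * (ℓ / (2 * Real.pi))) ^ 2 := by
    intro s
    unfold collarRho
    rw [show ℓ * s / (2 * Real.pi) = s * (ℓ / (2 * Real.pi)) by ring]
    rw [div_pow, inv_div]
    field_simp
  simp_rw [hcong]
  rw [intervalIntegral.integral_const_mul]
  rw [intervalIntegral.integral_comp_mul_right (fun x => Real.cos x ^ 2) hc]
  have hXA : collarX ℓ * (ℓ / (2 * Real.pi)) = A := by
    unfold collarX
    field_simp
    ring
  rw [neg_mul, hXA, integral_cos_sq]
  rw [Real.cos_neg, Real.sin_neg]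
  rw [smul_eq_mul]
  field_simp
  ring

end Dz2Aux

/-- `‖dz²‖²_{L²(𝒞(ℓ))} = 8π·∫_{-X(ℓ)}^{X(ℓ)} ρ_ℓ(s)⁻² ds = 32π⁵/ℓ³ − 16π⁴/3 + O(ℓ²)`. -/
theorem dz2_L2_norm_expansion :
    ∃ C : ℝ, ∀ ℓ : ℝ, 0 < ℓ → ℓ < 2 * Real.arsinh 1 →
      |8 * Real.pi * (∫ s in (-(collarX ℓ))..(collarX ℓ), (collarRho ℓ s ^ 2)⁻¹)
          - (32 * Real.pi ^ 5 / ℓ ^ 3 - 16 * Real.pi ^ 4 / 3)| ≤ C * ℓ ^ 2 := by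
  use 104 * Real.pi ^ 4
  intro ℓ hl hup
  have hpi := Real.pi_pos
  have hl' : ℓ ≠ 0 := hl.ne'
  have ht0 : (0:ℝ) ≤ ℓ / 2 := by linarith
  have harsinh1 : Real.arsinh 1 ≤ 1 := by
    have h1 : (1:ℝ) ≤ Real.sinh 1 := Dz2Aux.self_le_sinh' zero_le_one
    calc Real.arsinh 1 ≤ Real.arsinh (Real.sinh 1) := Real.arsinh_le_arsinh.mpr h1
      _ = 1 := Real.arsinh_sinh 1
  have ht1 : ℓ / 2 ≤ 1 := by linarith
  rw [Dz2Aux.collar_integral ℓ hl]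
  have hch := (Real.cosh_pos (ℓ / 2)).ne'
  have hsqrt : Real.sqrt (1 + Real.sinh (ℓ / 2) ^ 2) = Real.cosh (ℓ / 2) := by
    rw [← Real.cosh_sq', Real.sqrt_sq (Real.cosh_pos _).le]
  have hsinA : Real.sin (Real.pi / 2 - Real.arctan (Real.sinh (ℓ / 2)))
      = 1 / Real.cosh (ℓ / 2) := by
    rw [Real.sin_pi_div_two_sub, Real.cos_arctan, hsqrt]
  have hcosA : Real.cos (Real.pi / 2 - Real.arctan (Real.sinh (ℓ / 2)))
      = Real.sinh (ℓ / 2) / Real.cosh (ℓ / 2) := by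
    rw [Real.cos_pi_div_two_sub, Real.sin_arctan, hsqrt]
  have hD : 8 * Real.pi * (8 * Real.pi ^ 3 / ℓ ^ 3 *
        ((Real.pi / 2 - Real.arctan (Real.sinh (ℓ / 2)))
          + Real.sin (Real.pi / 2 - Real.arctan (Real.sinh (ℓ / 2)))
            * Real.cos (Real.pi / 2 - Real.arctan (Real.sinh (ℓ / 2)))))
        - (32 * Real.pi ^ 5 / ℓ ^ 3 - 16 * Real.pi ^ 4 / 3)
      = 64 * Real.pi ^ 4 / ℓ ^ 3 *
        (Real.sinh (ℓ / 2) / Real.cosh (ℓ / 2) ^ 2 - Real.arctan (Real.sinh (ℓ / 2))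
          + 2/3 * (ℓ / 2) ^ 3) := by
    rw [hsinA, hcosA]
    field_simp
    ring
  rw [hD, abs_mul, abs_of_pos (by positivity : (0:ℝ) < 64 * Real.pi ^ 4 / ℓ ^ 3)]
  have hphi := Dz2Aux.phi_bound ht0 ht1
  calc 64 * Real.pi ^ 4 / ℓ ^ 3 *
        |Real.sinh (ℓ / 2) / Real.cosh (ℓ / 2) ^ 2 - Real.arctan (Real.sinh (ℓ / 2))
          + 2/3 * (ℓ / 2) ^ 3|
      ≤ 64 * Real.pi ^ 4 / ℓ ^ 3 * (52 * (ℓ / 2) ^ 5) := by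
        exact mul_le_mul_of_nonneg_left hphi (by positivity)
    _ = 104 * Real.pi ^ 4 * ℓ ^ 2 := by
        field_simp
        ring
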